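/- There exists a universal constant k > 0 with the following property. Let ν be a probability measure on 𝕋, U₁(x) := ∫ d(x,y) ν(dy), and μ_β the Gibbs measure with density exp(−βU₁)/Z_β with respect to λ. For every s > 0 and β ≥ 1 with βs ≤ 1, every y ∈ 𝕋 and every f ∈ C¹(𝕋), setting g_y(z) := f(z)·σ(z,y) for z ∉ {y, y+π} and, for x ∈ B(y, π−s) with x ≠ y, x_s := x − s·σ(x,y), one has ∫_{B(y,π−s)} [ exp(β(U₁(x) − U₁(x_s))) g_y(x_s) − g_y(x) ]² μ_β(dx) ≤ k s² β² ( ∫_𝕋 (f')² dμ_β + ∫_𝕋 f² dμ_β ). -/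

import Mathlib

open MeasureTheory Real Set Filter

noncomputable section

instance : Fact (0 < 2 * π) := ⟨Real.two_pi_pos⟩

/-- The circle `𝕋 = ℝ/(2πℤ)`. -/
abbrev 𝕋 : Type := AddCircle (2 * π)

/-- The normalized Haar probability measure `λ` on the circle. -/
def lam : Measure 𝕋 := (ENNReal.ofReal (2 * π))⁻¹ • volume

/-- The representative of a point of the circle in `(-π, π]`. -/
def rep (z : 𝕋) : ℝ := ((AddCircle.equivIoc (2 * π) (-π) z : Set.Ioc (-π) (-π + 2 * π)) : ℝ)

/-- `σ(x,y) = +1` if the representative of `y - x` lies in `[0, π]`, `-1` otherwise. -/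
def sgn (x y : 𝕋) : ℝ := if 0 ≤ rep (y - x) then 1 else -1

/-- The potential `U₁(x) = ∫ d(x,y) ν(dy)`. -/
def U1 (ν : Measure 𝕋) (x : 𝕋) : ℝ := ∫ y, dist x y ∂ν

/-- The normalizing constant `Z_β = ∫ exp(-β U₁) dλ`. -/
def Z1 (ν : Measure 𝕋) (β : ℝ) : ℝ := ∫ x, Real.exp (-β * U1 ν x) ∂lam

/-- The Gibbs measure `μ_β` with density `exp(-β U₁)/Z_β` w.r.t. `λ`. -/
def gibbs1 (ν : Measure 𝕋) (β : ℝ) : Measure 𝕋 :=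
  lam.withDensity fun x => ENNReal.ofReal (Real.exp (-β * U1 ν x) / Z1 ν β)

lemma rep_mem (z : 𝕋) : rep z ∈ Ioc (-π) π := by
  have h : rep z ∈ Ioc (-π) (-π + 2 * π) := (AddCircle.equivIoc (2 * π) (-π) z).property
  exact ⟨h.1, by linarith [h.2]⟩

lemma coe_rep (z : 𝕋) : ((rep z : ℝ) : 𝕋) = z :=
  (AddCircle.equivIoc (2 * π) (-π)).symm_apply_apply z

lemma rep_coe {u : ℝ} (hu : u ∈ Ioc (-π) π) : rep ((u : ℝ) : 𝕋) = u := by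
  have hu' : u ∈ Ioc (-π) (-π + 2 * π) := ⟨hu.1, by linarith [hu.2]⟩
  simp only [rep, AddCircle.equivIoc, QuotientAddGroup.equivIocMod_coe]
  exact (toIocMod_eq_self _).mpr hu'

lemma norm_coe_of_mem {u : ℝ} (hu : u ∈ Ioc (-π) π) : ‖((u : ℝ) : 𝕋)‖ = |u| := by
  rw [AddCircle.norm_coe_eq_abs_iff (2 * π) (ne_of_gt Real.two_pi_pos)]
  rw [abs_of_pos Real.two_pi_pos, abs_le]
  constructor <;> [linarith [hu.1]; linarith [hu.2]]

lemma dist_eq_abs_rep (x y : 𝕋) : dist x y = |rep (x - y)| := by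
  rw [dist_eq_norm]
  conv_lhs => rw [← coe_rep (x - y)]
  exact norm_coe_of_mem (rep_mem _)

lemma dist_le_pi (x y : 𝕋) : dist x y ≤ π := by
  rw [dist_eq_abs_rep]
  have h := rep_mem (x - y)
  rw [abs_le]; constructor <;> [linarith [h.1]; linarith [h.2]]

lemma dist_add_coe_le (x : 𝕋) (c : ℝ) : dist x (x + (c : 𝕋)) ≤ |c| := by
  rw [dist_eq_norm]
  have h : x - (x + (c : 𝕋)) = ((-c : ℝ) : 𝕋) := by
    rw [AddCircle.coe_neg]; abel
  rw [h]
  calc ‖((-c : ℝ) : 𝕋)‖ ≤ ‖(-c : ℝ)‖ := QuotientAddGroup.norm_mk_le_norm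
  _ = |c| := by rw [Real.norm_eq_abs, abs_neg]

lemma lift_eq (f : ℝ → ℝ) (h : Function.Periodic f (2 * π)) (z : 𝕋) :
    h.lift z = f (rep z) := by
  conv_lhs => rw [← coe_rep z]
  exact h.lift_coe _

lemma lift_coe' (f : ℝ → ℝ) (h : Function.Periodic f (2 * π)) (a : ℝ) :
    f (rep ((a : ℝ) : 𝕋)) = f a := by
  rw [← lift_eq f h, h.lift_coe]

lemma measurable_rep : Measurable rep :=
  measurable_subtype_coe.comp (AddCircle.measurableEquivIoc (2 * π) (-π)).measurable

lemma measurable_sgn (y : 𝕋) : Measurable fun x : 𝕋 => sgn x y := by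
  unfold sgn
  apply Measurable.ite _ measurable_const measurable_const
  exact measurableSet_le measurable_const
    (measurable_rep.comp (measurable_const.sub measurable_id))

lemma sgn_sq (x y : 𝕋) : sgn x y ^ 2 = 1 := by
  unfold sgn; split <;> norm_num

lemma sgn_cases (x y : 𝕋) : sgn x y = 1 ∨ sgn x y = -1 := by
  unfold sgn; split <;> simp

lemma abs_sgn (x y : 𝕋) : |sgn x y| = 1 := by
  rcases sgn_cases x y with h | h <;> rw [h] <;> norm_num

instance lam_prob : IsProbabilityMeasure lam := by
  constructor
  rw [lam, Measure.smul_apply, AddCircle.measure_univ, smul_eq_mul]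
  exact ENNReal.inv_mul_cancel (ENNReal.ofReal_pos.mpr Real.two_pi_pos).ne' ENNReal.ofReal_ne_top

section U1facts

variable (ν : Measure 𝕋) [IsProbabilityMeasure ν]

lemma integrable_dist (x : 𝕋) : Integrable (fun y => dist x y) ν := by
  refine ⟨(continuous_const.dist continuous_id).aestronglyMeasurable, ?_⟩
  exact HasFiniteIntegral.of_bounded (C := π)
    (ae_of_all _ fun y => by rw [Real.norm_eq_abs, abs_of_nonneg dist_nonneg]; exact dist_le_pi x y)

lemma U1_nonneg (x : 𝕋) : 0 ≤ U1 ν x := integral_nonneg fun y => dist_nonneg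

lemma U1_le_pi (x : 𝕋) : U1 ν x ≤ π := by
  have h : U1 ν x ≤ ∫ _, π ∂ν :=
    integral_mono (integrable_dist ν x) (integrable_const π) fun y => dist_le_pi x y
  simpa using h

lemma U1_lip (x z : 𝕋) : |U1 ν x - U1 ν z| ≤ dist x z := by
  rw [U1, U1, ← integral_sub (integrable_dist ν x) (integrable_dist ν z)]
  calc |∫ y, (dist x y - dist z y) ∂ν| ≤ ∫ y, |dist x y - dist z y| ∂ν := by
        simpa [Real.norm_eq_abs] using
          norm_integral_le_integral_norm (μ := ν) (f := fun y => dist x y - dist z y)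
    _ ≤ ∫ _, dist x z ∂ν := by
        apply integral_mono _ (integrable_const _) fun y => abs_dist_sub_le x z y
        exact ((integrable_dist ν x).sub (integrable_dist ν z)).abs
    _ = dist x z := by simp

lemma U1_cont : Continuous (U1 ν) := by
  apply LipschitzWith.continuous (K := 1)
  apply LipschitzWith.of_dist_le_mul
  intro x z
  rw [Real.dist_eq]
  simpa using U1_lip ν x z

lemma integrable_exp_U1 (β : ℝ) : Integrable (fun x => Real.exp (-β * U1 ν x)) lam := by
  refine ⟨((continuous_const.mul (U1_cont ν)).rexp).aestronglyMeasurable, ?_⟩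
  exact HasFiniteIntegral.of_bounded (C := Real.exp (|β| * π))
    (ae_of_all _ fun x => by
      rw [Real.norm_eq_abs, Real.abs_exp]
      apply Real.exp_le_exp.mpr
      have h1 := U1_nonneg ν x; have h2 := U1_le_pi ν x
      rcases abs_cases β with ⟨hb, _⟩ | ⟨hb, _⟩ <;> nlinarith [abs_nonneg β])

lemma Z1_pos {β : ℝ} (hβ : 0 ≤ β) : 0 < Z1 ν β := by
  have : Real.exp (-β * π) ≤ Z1 ν β := by
    have h : ∫ _, Real.exp (-β * π) ∂lam ≤ Z1 ν β := by
      apply integral_mono (integrable_const _) (integrable_exp_U1 ν β) fun x => ?_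
      apply Real.exp_le_exp.mpr
      have := U1_le_pi ν x
      nlinarith
    simpa using h
  calc (0:ℝ) < Real.exp (-β * π) := Real.exp_pos _
  _ ≤ Z1 ν β := this

end U1facts

section gibbs
open scoped ENNReal NNReal

variable (ν : Measure 𝕋) [IsProbabilityMeasure ν]

def rho (ν : Measure 𝕋) (β : ℝ) : 𝕋 → ℝ≥0∞ :=
  fun x => ENNReal.ofReal (Real.exp (-β * U1 ν x) / Z1 ν β)

lemma measurable_rho (β : ℝ) : Measurable (rho ν β) :=
  ENNReal.measurable_ofReal.comp
    ((Real.measurable_exp.comp ((U1_cont ν).measurable.const_mul (-β))).div_const _)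

lemma gibbs_lintegral (β : ℝ) (G : 𝕋 → ℝ≥0∞) (hG : Measurable G) :
    ∫⁻ x, G x ∂(gibbs1 ν β) = ∫⁻ x, rho ν β x * G x ∂lam := by
  have h : gibbs1 ν β = lam.withDensity (rho ν β) := rfl
  rw [h, lintegral_withDensity_eq_lintegral_mul _ (measurable_rho ν β) hG]
  rfl

instance : (volume : Measure 𝕋).IsAddRightInvariant :=
  ⟨fun g => by
    rw [show (· + g : 𝕋 → 𝕋) = (g + ·) from funext fun x => add_comm x g]
    exact map_add_left_eq_self volume g⟩

instance : lam.IsAddRightInvariant := by unfold lam; infer_instance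

lemma lam_shift (H : 𝕋 → ℝ≥0∞) (hH : Measurable H) (c : 𝕋) :
    ∫⁻ x, H (x + c) ∂lam = ∫⁻ x, H x ∂lam := by
  conv_rhs => rw [← map_add_right_eq_self lam c]
  rw [lintegral_map hH (measurable_add_const c)]

lemma rho_shift_le {β : ℝ} (hβ : 0 ≤ β) (c : ℝ) (x : 𝕋) :
    rho ν β x ≤ ENNReal.ofReal (Real.exp (β * |c|)) * rho ν β (x + (c : 𝕋)) := by
  have hZ := Z1_pos ν hβ
  simp only [rho]
  rw [← ENNReal.ofReal_mul (Real.exp_nonneg _)]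
  apply ENNReal.ofReal_le_ofReal
  rw [← mul_div_assoc, div_le_div_iff_of_pos_right hZ]
  have hU : U1 ν (x + (c : 𝕋)) - U1 ν x ≤ |c| := by
    have h1 := U1_lip ν x (x + (c : 𝕋))
    have h2 := dist_add_coe_le x c
    have h3 := abs_le.mp h1
    linarith [h3.1]
  rw [← Real.exp_add]
  apply Real.exp_le_exp.mpr
  have hprod := mul_le_mul_of_nonneg_left hU hβ
  linarith

lemma lintegral_shift_le {β : ℝ} (hβ : 0 ≤ β) (G : 𝕋 → ℝ≥0∞) (hG : Measurable G) (c : ℝ) :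
    ∫⁻ x, G (x + ((c : ℝ) : 𝕋)) ∂(gibbs1 ν β)
      ≤ ENNReal.ofReal (Real.exp (β * |c|)) * ∫⁻ x, G x ∂(gibbs1 ν β) := by
  have hGc : Measurable fun x : 𝕋 => G (x + ((c : ℝ) : 𝕋)) :=
    hG.comp (measurable_add_const _)
  rw [gibbs_lintegral ν β _ hGc, gibbs_lintegral ν β G hG]
  calc ∫⁻ x, rho ν β x * G (x + (c : 𝕋)) ∂lam
      ≤ ∫⁻ x, ENNReal.ofReal (Real.exp (β * |c|)) *
          (rho ν β (x + (c : 𝕋)) * G (x + (c : 𝕋))) ∂lam := by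
        apply lintegral_mono fun x => ?_
        rw [← mul_assoc]
        exact mul_le_mul_left (rho_shift_le ν hβ c x) _
    _ = ENNReal.ofReal (Real.exp (β * |c|)) *
          ∫⁻ x, rho ν β (x + (c : 𝕋)) * G (x + (c : 𝕋)) ∂lam := by
        rw [lintegral_const_mul _
          (show Measurable fun x : 𝕋 => rho ν β (x + (c:𝕋)) * G (x + (c:𝕋)) from
            (((measurable_rho ν β).mul hG).comp (measurable_add_const _)))]
    _ = ENNReal.ofReal (Real.exp (β * |c|)) * ∫⁻ x, rho ν β x * G x ∂lam := by
        rw [lam_shift (fun z => rho ν β z * G z) ((measurable_rho ν β).mul hG) ((c:ℝ) : 𝕋)]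

lemma lintegral_move_le {β : ℝ} (hβ : 1 ≤ β) {t : ℝ} (ht : |t| * β ≤ 1) (y : 𝕋)
    (G : 𝕋 → ℝ≥0∞) (hG : Measurable G) :
    ∫⁻ x, G (x + ((-(t * sgn x y) : ℝ) : 𝕋)) ∂(gibbs1 ν β)
      ≤ ENNReal.ofReal (2 * Real.exp 1) * ∫⁻ x, G x ∂(gibbs1 ν β) := by
  have hβ0 : (0:ℝ) ≤ β := le_trans zero_le_one hβ
  have hexp : ∀ u : ℝ, |u| = |t| → Real.exp (β * |u|) ≤ Real.exp 1 := by
    intro u hu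
    apply Real.exp_le_exp.mpr
    rw [hu]; nlinarith
  have h1 : ∀ x : 𝕋, G (x + ((-(t * sgn x y) : ℝ) : 𝕋))
      ≤ G (x + ((-t : ℝ) : 𝕋)) + G (x + ((t : ℝ) : 𝕋)) := by
    intro x
    rcases sgn_cases x y with h | h <;> rw [h]
    · rw [mul_one]; exact self_le_add_right _ _
    · rw [mul_neg_one, neg_neg]; exact self_le_add_left _ _
  calc ∫⁻ x, G (x + ((-(t * sgn x y) : ℝ) : 𝕋)) ∂(gibbs1 ν β)
      ≤ ∫⁻ x, (G (x + ((-t : ℝ) : 𝕋)) + G (x + ((t : ℝ) : 𝕋))) ∂(gibbs1 ν β) :=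
        lintegral_mono h1
    _ = (∫⁻ x, G (x + ((-t : ℝ) : 𝕋)) ∂(gibbs1 ν β))
          + ∫⁻ x, G (x + ((t : ℝ) : 𝕋)) ∂(gibbs1 ν β) :=
        lintegral_add_left (hG.comp (measurable_add_const _)) _
    _ ≤ ENNReal.ofReal (Real.exp (β * |(-t : ℝ)|)) * (∫⁻ x, G x ∂(gibbs1 ν β))
          + ENNReal.ofReal (Real.exp (β * |t|)) * ∫⁻ x, G x ∂(gibbs1 ν β) :=
        add_le_add (lintegral_shift_le ν hβ0 G hG (-t)) (lintegral_shift_le ν hβ0 G hG t)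
    _ ≤ ENNReal.ofReal (Real.exp 1) * (∫⁻ x, G x ∂(gibbs1 ν β))
          + ENNReal.ofReal (Real.exp 1) * ∫⁻ x, G x ∂(gibbs1 ν β) := by
        apply add_le_add
        · exact mul_le_mul_left (ENNReal.ofReal_le_ofReal (hexp (-t) (abs_neg t))) _
        · exact mul_le_mul_left (ENNReal.ofReal_le_ofReal (hexp t rfl)) _
    _ = ENNReal.ofReal (2 * Real.exp 1) * ∫⁻ x, G x ∂(gibbs1 ν β) := by
        rw [← two_mul, ← mul_assoc, ENNReal.ofReal_mul (by norm_num : (0:ℝ) ≤ 2),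
          ENNReal.ofReal_ofNat]

end gibbs

section ftccs
open scoped ENNReal

lemma ftc_cs (f : ℝ → ℝ) (hf : ContDiff ℝ 1 f) (a ε : ℝ) (hε : ε = 1 ∨ ε = -1)
    {s : ℝ} (hs : 0 ≤ s) :
    ENNReal.ofReal ((f (a - s * ε) - f a) ^ 2)
      ≤ ENNReal.ofReal s *
        ∫⁻ t in Ioc (0:ℝ) s, ENNReal.ofReal ((deriv f (a - t * ε)) ^ 2) := by
  have habs_eps : |ε| = 1 := by rcases hε with h | h <;> rw [h] <;> norm_num
  have hd : ∀ t : ℝ, HasDerivAt (fun u : ℝ => f (a - u * ε))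
      (deriv f (a - t * ε) * (-ε)) t := by
    intro t
    have hinner : HasDerivAt (fun u : ℝ => a - u * ε) (-ε) t := by
      simpa using ((hasDerivAt_id t).mul_const ε).const_sub a
    exact (((hf.differentiable one_ne_zero) (a - t * ε)).hasDerivAt).comp t hinner
  have hcont : Continuous fun t : ℝ => deriv f (a - t * ε) * (-ε) :=
    (((hf.continuous_deriv le_rfl).comp
      (continuous_const.sub (continuous_id.mul continuous_const)))).mul continuous_const
  have hint : ∫ t in (0:ℝ)..s, deriv f (a - t * ε) * (-ε)
      = f (a - s * ε) - f a := by
    rw [intervalIntegral.integral_eq_sub_of_hasDerivAt (fun t _ => hd t)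
      (hcont.intervalIntegrable 0 s)]
    norm_num
  have habs : |f (a - s * ε) - f a| ≤ ∫ t in Ioc (0:ℝ) s, |deriv f (a - t * ε)| := by
    rw [← hint]
    calc |∫ t in (0:ℝ)..s, deriv f (a - t * ε) * (-ε)|
        ≤ ∫ t in (0:ℝ)..s, |deriv f (a - t * ε) * (-ε)| :=
          intervalIntegral.abs_integral_le_integral_abs hs
      _ = ∫ t in (0:ℝ)..s, |deriv f (a - t * ε)| := by
          congr 1; funext t; rw [abs_mul, abs_neg, habs_eps, mul_one]
      _ = ∫ t in Ioc (0:ℝ) s, |deriv f (a - t * ε)| :=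
          intervalIntegral.integral_of_le hs
  have hq_cont : Continuous fun t : ℝ => |deriv f (a - t * ε)| :=
    ((hf.continuous_deriv le_rfl).comp
      (continuous_const.sub (continuous_id.mul continuous_const))).abs
  have hIo : IntegrableOn (fun t : ℝ => |deriv f (a - t * ε)|) (Ioc 0 s) volume :=
    hq_cont.integrableOn_Ioc
  -- pass to lintegral
  have hlift : ENNReal.ofReal (∫ t in Ioc (0:ℝ) s, |deriv f (a - t * ε)|)
      = ∫⁻ t in Ioc (0:ℝ) s, ENNReal.ofReal |deriv f (a - t * ε)| :=
    ofReal_integral_eq_lintegral_ofReal hIo (ae_of_all _ fun t => abs_nonneg _)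
  have hsq : ∀ x : ℝ≥0∞, (x ^ ((1:ℝ)/2)) ^ (2:ℕ) = x := fun x => by
    rw [← ENNReal.rpow_natCast (x ^ ((1:ℝ)/2)) 2, ← ENNReal.rpow_mul]
    norm_num
  set μ' := volume.restrict (Ioc (0:ℝ) s)
  have hCS := ENNReal.lintegral_mul_le_Lp_mul_Lq μ'
    (Real.HolderConjugate.two_two : Real.HolderConjugate 2 2)
    (f := fun t => ENNReal.ofReal |deriv f (a - t * ε)|) (g := fun _ => 1)
    (ENNReal.measurable_ofReal.comp hq_cont.measurable).aemeasurable
    aemeasurable_const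
  simp only [Pi.mul_apply, mul_one, ENNReal.one_rpow] at hCS
  have hμuniv : μ' Set.univ = ENNReal.ofReal s := by
    rw [Measure.restrict_apply_univ, Real.volume_Ioc, sub_zero]
  calc ENNReal.ofReal ((f (a - s * ε) - f a) ^ 2)
      = ENNReal.ofReal (|f (a - s * ε) - f a| ^ 2) := by rw [sq_abs]
    _ = (ENNReal.ofReal |f (a - s * ε) - f a|) ^ (2:ℕ) := by
        rw [ENNReal.ofReal_pow (abs_nonneg _)]
    _ ≤ (ENNReal.ofReal (∫ t in Ioc (0:ℝ) s, |deriv f (a - t * ε)|)) ^ (2:ℕ) := by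
        apply pow_le_pow_left' (ENNReal.ofReal_le_ofReal habs)
    _ = (∫⁻ t, ENNReal.ofReal |deriv f (a - t * ε)| ∂μ') ^ (2:ℕ) := by rw [hlift]
    _ ≤ ((∫⁻ t, ENNReal.ofReal |deriv f (a - t * ε)| ^ (2:ℝ) ∂μ') ^ ((1:ℝ)/2)
          * (∫⁻ _, 1 ∂μ') ^ ((1:ℝ)/2)) ^ (2:ℕ) := by
        apply pow_le_pow_left' hCS
    _ = (∫⁻ t, ENNReal.ofReal |deriv f (a - t * ε)| ^ (2:ℝ) ∂μ') * ∫⁻ _, 1 ∂μ' := by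
        rw [mul_pow, hsq, hsq]
    _ = (∫⁻ t, ENNReal.ofReal ((deriv f (a - t * ε)) ^ 2) ∂μ') * ENNReal.ofReal s := by
        rw [lintegral_one, hμuniv]
        congr 1
        apply lintegral_congr fun t => ?_
        rw [show ((2:ℝ)) = ((2:ℕ):ℝ) by norm_num, ENNReal.rpow_natCast,
          ← ENNReal.ofReal_pow (abs_nonneg _), sq_abs]
    _ = ENNReal.ofReal s * ∫⁻ t in Ioc (0:ℝ) s, ENNReal.ofReal ((deriv f (a - t * ε)) ^ 2) := by
        rw [mul_comm]

end ftccs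

section geometry

lemma coe_shift (y x : 𝕋) (c : ℝ) :
    y - (x + ((c : ℝ) : 𝕋)) = ((rep (y - x) - c : ℝ) : 𝕋) := by
  rw [AddCircle.coe_sub, coe_rep]
  abel

lemma abs_rep_eq_dist (x y : 𝕋) : |rep (y - x)| = dist x y := by
  rw [dist_comm, dist_eq_abs_rep]

lemma sgn_shift (y x : 𝕋) {s : ℝ} (hs : 0 < s) (hd : dist x y < π - s) :
    sgn (x + ((-(s * sgn x y) : ℝ) : 𝕋)) y = sgn x y := by
  have hr := abs_rep_eq_dist x y
  set r := rep (y - x) with hrdef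
  have hrabs : |r| < π - s := by rw [hr]; exact hd
  by_cases h : 0 ≤ r
  · have hsgn : sgn x y = 1 := if_pos h
    rw [hsgn]
    have h1 : y - (x + ((-(s * 1) : ℝ) : 𝕋)) = ((r + s : ℝ) : 𝕋) := by
      rw [coe_shift, ← hrdef]; norm_num
    have h2 : r + s ∈ Ioc (-π) π := by
      constructor
      · nlinarith [Real.pi_pos]
      · have : r < π - s := lt_of_le_of_lt (le_abs_self r) hrabs
        linarith
    unfold sgn
    rw [h1, rep_coe h2, if_pos (by linarith)]
  · have hsgn : sgn x y = -1 := if_neg h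
    rw [hsgn]
    push_neg at h
    have h1 : y - (x + ((-(s * (-1)) : ℝ) : 𝕋)) = ((r - s : ℝ) : 𝕋) := by
      rw [coe_shift, ← hrdef]; norm_num
    have h2 : r - s ∈ Ioc (-π) π := by
      have : -r < π - s := lt_of_le_of_lt (neg_le_abs r) hrabs
      constructor
      · linarith
      · linarith [Real.pi_pos]
    unfold sgn
    rw [h1, rep_coe h2, if_neg (by push_neg; linarith)]

end geometry

section mainprep
open scoped ENNReal

variable (ν : Measure 𝕋) [IsProbabilityMeasure ν]

lemma gibbs_finite {β : ℝ} (hβ : 0 ≤ β) : gibbs1 ν β Set.univ ≠ ⊤ := by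
  have hZ := Z1_pos ν hβ
  have h : gibbs1 ν β Set.univ = ∫⁻ x, rho ν β x ∂lam := by
    rw [gibbs1, withDensity_apply _ MeasurableSet.univ, Measure.restrict_univ]; rfl
  rw [h]
  apply ne_top_of_le_ne_top ((ENNReal.ofReal_ne_top (r := 1 / Z1 ν β)))
  have hb : ∀ x, rho ν β x ≤ ENNReal.ofReal (1 / Z1 ν β) := by
    intro x
    apply ENNReal.ofReal_le_ofReal
    apply (div_le_div_iff_of_pos_right hZ).mpr
    rw [Real.exp_le_one_iff]
    nlinarith [U1_nonneg ν x]
  calc ∫⁻ x, rho ν β x ∂lam ≤ ∫⁻ _, ENNReal.ofReal (1 / Z1 ν β) ∂lam := lintegral_mono hb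
    _ = ENNReal.ofReal (1 / Z1 ν β) := by simp

lemma periodic_deriv' (f : ℝ → ℝ) (hper : Function.Periodic f (2 * π)) :
    Function.Periodic (deriv f) (2 * π) := by
  intro x
  have hfun : (fun u => f (u + 2 * π)) = f := funext fun u => hper u
  rw [← deriv_comp_add_const f (2 * π), hfun]

lemma lift_add (f : ℝ → ℝ) (hper : Function.Periodic f (2 * π)) (x : 𝕋) (c : ℝ) :
    f (rep (x + ((c : ℝ) : 𝕋))) = f (rep x + c) := by
  conv_lhs => rw [← coe_rep x, ← AddCircle.coe_add]
  rw [lift_coe' f hper]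

end mainprep

section main
open scoped ENNReal

/-- Lemma `Tstarpa1`: there is a universal constant `k > 0` such that for any
probability measure `ν` on the circle, any `s > 0`, `β ≥ 1` with `βs ≤ 1`, any `y` and any
`C¹` function `f` on the circle, setting `g_y(z) = f(z)σ(z,y)` and `x_s = x - sσ(x,y)`,
`∫_{B(y,π-s)} (e^{β(U₁(x)-U₁(x_s))} g_y(x_s) - g_y(x))² dμ_β
   ≤ k s² β² (∫ (f')² dμ_β + ∫ f² dμ_β)`. -/
theorem adjoint_operator_L2_estimate_p_one :
    ∃ k : ℝ, 0 < k ∧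
      ∀ (ν : Measure 𝕋), IsProbabilityMeasure ν →
      ∀ (s β : ℝ), 0 < s → 1 ≤ β → β * s ≤ 1 →
      ∀ (y : 𝕋) (f : ℝ → ℝ), Function.Periodic f (2 * π) → ContDiff ℝ 1 f →
      ∀ (xs : 𝕋 → 𝕋), (∀ x, xs x = x + ((-(s * sgn x y) : ℝ) : 𝕋)) →
      ∀ (gy : 𝕋 → ℝ), (∀ z, gy z = f (rep z) * sgn z y) →
        (∫ x in Metric.ball y (π - s),
            (Real.exp (β * (U1 ν x - U1 ν (xs x))) * gy (xs x) - gy x) ^ 2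
              ∂(gibbs1 ν β))
          ≤ k * s ^ 2 * β ^ 2 *
              ((∫ x, (deriv f (rep x)) ^ 2 ∂(gibbs1 ν β))
                + ∫ x, (f (rep x)) ^ 2 ∂(gibbs1 ν β)) := by
  classical
  refine ⟨16 * Real.exp 1, by positivity, ?_⟩
  intro ν hν s β hs hβ hβs y f hper hf xs hxs gy hgy
  have hβ0 : (0:ℝ) ≤ β := le_trans zero_le_one hβ
  have hs1 : s ≤ 1 := by nlinarith
  have hper' := periodic_deriv' f hper
  set μ := gibbs1 ν β with hμdef
  haveI : IsFiniteMeasure μ := ⟨lt_top_iff_ne_top.mpr (gibbs_finite ν hβ0)⟩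
  have hcf : Continuous f := hf.continuous
  have hcf' : Continuous (deriv f) := hf.continuous_deriv le_rfl
  have hmf : Measurable fun z : 𝕋 => f (rep z) := hcf.measurable.comp measurable_rep
  have hmd : Measurable fun z : 𝕋 => deriv f (rep z) := hcf'.measurable.comp measurable_rep
  set Gf : 𝕋 → ℝ≥0∞ := fun z => ENNReal.ofReal ((f (rep z)) ^ 2) with hGfdef
  set Gd : 𝕋 → ℝ≥0∞ := fun z => ENNReal.ofReal ((deriv f (rep z)) ^ 2) with hGddef
  have hmGf : Measurable Gf := ENNReal.measurable_ofReal.comp (hmf.pow_const 2)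
  have hmGd : Measurable Gd := ENNReal.measurable_ofReal.comp (hmd.pow_const 2)
  set IF := ∫⁻ z, Gf z ∂μ with hIFdef
  set ID := ∫⁻ z, Gd z ∂μ with hIDdef
  -- boundedness and finiteness
  have hboundlift : ∀ g : ℝ → ℝ, Continuous g → ∃ C : ℝ, ∀ z : 𝕋, (g (rep z)) ^ 2 ≤ C := by
    intro g hg
    obtain ⟨C, hC⟩ :=
      (isCompact_Icc (a := -π) (b := π)).exists_bound_of_continuousOn hg.continuousOn
    refine ⟨C ^ 2, fun z => ?_⟩
    have h0 := rep_mem z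
    have h1 : |g (rep z)| ≤ C := by
      simpa [Real.norm_eq_abs] using hC (rep z) ⟨le_of_lt h0.1, h0.2⟩
    nlinarith [abs_nonneg (g (rep z)), sq_abs (g (rep z))]
  have hfin : ∀ (g : ℝ → ℝ) (hg : Continuous g),
      (∫⁻ z, ENNReal.ofReal ((g (rep z)) ^ 2) ∂μ) ≠ ⊤ := by
    intro g hg
    obtain ⟨C, hC⟩ := hboundlift g hg
    apply ne_top_of_le_ne_top (ENNReal.mul_ne_top ENNReal.ofReal_ne_top (measure_ne_top μ _))
    calc ∫⁻ z, ENNReal.ofReal ((g (rep z)) ^ 2) ∂μ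
        ≤ ∫⁻ _, ENNReal.ofReal C ∂μ :=
          lintegral_mono fun z => ENNReal.ofReal_le_ofReal (hC z)
      _ = ENNReal.ofReal C * μ Set.univ := lintegral_const _
  have hIF : IF ≠ ⊤ := hfin f hcf
  have hID : ID ≠ ⊤ := hfin (deriv f) hcf'
  -- the shift map
  have hmshift : ∀ t : ℝ, Measurable fun x : 𝕋 => x + ((-(t * sgn x y) : ℝ) : 𝕋) := by
    intro t
    exact measurable_id.add
      (AddCircle.measurable_mk'.comp (((measurable_sgn y).const_mul t).neg))
  have hmxs : Measurable xs := by
    have : xs = fun x => x + ((-(s * sgn x y) : ℝ) : 𝕋) := funext hxs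
    rw [this]; exact hmshift s
  have hmgy : Measurable gy := by
    have : gy = fun z => f (rep z) * sgn z y := funext hgy
    rw [this]; exact hmf.mul (measurable_sgn y)
  -- the integrand
  set H : 𝕋 → ℝ := fun x =>
    (Real.exp (β * (U1 ν x - U1 ν (xs x))) * gy (xs x) - gy x) ^ 2 with hHdef
  have hmH : Measurable H := by
    apply Measurable.pow_const
    apply Measurable.sub _ hmgy
    apply Measurable.mul _ (hmgy.comp hmxs)
    exact Real.measurable_exp.comp
      (((U1_cont ν).measurable.sub ((U1_cont ν).measurable.comp hmxs)).const_mul β)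
  -- inner double-integral function
  set q : 𝕋 → ℝ → ℝ≥0∞ :=
    fun x t => ENNReal.ofReal ((deriv f (rep x - t * sgn x y)) ^ 2) with hqdef
  have hmq : Measurable (Function.uncurry q) := by
    apply ENNReal.measurable_ofReal.comp
    apply Measurable.pow_const
    apply hcf'.measurable.comp
    exact (measurable_rep.comp measurable_fst).sub
      (measurable_snd.mul ((measurable_sgn y).comp measurable_fst))
  set J : 𝕋 → ℝ≥0∞ := fun x => ∫⁻ t in Ioc (0:ℝ) s, q x t with hJdef
  have hmJ : Measurable J := hmq.lintegral_prod_right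
  -- pointwise bound on the ball
  have hpt : ∀ x ∈ Metric.ball y (π - s),
      ENNReal.ofReal (H x)
        ≤ 2 * ENNReal.ofReal (4 * β ^ 2 * s ^ 2) * Gf (x + ((-(s * sgn x y) : ℝ) : 𝕋))
            + 2 * ENNReal.ofReal s * J x := by
    intro x hx
    have hd : dist x y < π - s := Metric.mem_ball.mp hx
    have hsgneq : sgn (xs x) y = sgn x y := by rw [hxs x]; exact sgn_shift y x hs hd
    set σ := sgn x y with hσdef
    set A : ℝ := f (rep (xs x)) with hAdef
    set E : ℝ := Real.exp (β * (U1 ν x - U1 ν (xs x))) with hEdef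
    have hgyxs : gy (xs x) = A * σ := by rw [hgy (xs x), hsgneq]
    have hgyx : gy x = f (rep x) * σ := hgy x
    have hσsq : σ ^ 2 = 1 := sgn_sq x y
    have hHval : H x = (E * A - f (rep x)) ^ 2 := by
      show (E * gy (xs x) - gy x) ^ 2 = _
      rw [hgyxs, hgyx]
      have : (E * (A * σ) - f (rep x) * σ) ^ 2 = σ ^ 2 * (E * A - f (rep x)) ^ 2 := by ring
      rw [this, hσsq, one_mul]
    have hdist : dist x (xs x) ≤ s := by
      rw [hxs x]
      have h1 := dist_add_coe_le x (-(s * σ))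
      rwa [abs_neg, abs_mul, abs_sgn, mul_one, abs_of_pos hs] at h1
    have hUd : |U1 ν x - U1 ν (xs x)| ≤ s := le_trans (U1_lip ν x (xs x)) hdist
    have harg : |β * (U1 ν x - U1 ν (xs x))| ≤ β * s := by
      rw [abs_mul, abs_of_nonneg hβ0]
      exact mul_le_mul_of_nonneg_left hUd hβ0
    have hE1 : |E - 1| ≤ 2 * (β * s) := by
      have h2 := Real.abs_exp_sub_one_le (le_trans harg hβs)
      calc |E - 1| ≤ 2 * |β * (U1 ν x - U1 ν (xs x))| := h2
        _ ≤ 2 * (β * s) := by linarith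
    have hEsq : (E - 1) ^ 2 ≤ 4 * β ^ 2 * s ^ 2 := by
      nlinarith [sq_abs (E - 1), abs_nonneg (E - 1)]
    have hdecomp : H x ≤ 2 * ((E - 1) ^ 2 * A ^ 2) + 2 * (A - f (rep x)) ^ 2 := by
      rw [hHval]
      nlinarith [sq_nonneg ((E - 1) * A - (A - f (rep x)))]
    have hA : A = f (rep x - s * σ) := by
      rw [hAdef, hxs x, lift_add f hper x (-(s * σ)), ← sub_eq_add_neg]
    have hcs : ENNReal.ofReal ((A - f (rep x)) ^ 2) ≤ ENNReal.ofReal s * J x := by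
      rw [hA]
      exact ftc_cs f hf (rep x) σ (sgn_cases x y) hs.le
    have hGfeq : ENNReal.ofReal (A ^ 2) = Gf (x + ((-(s * sgn x y) : ℝ) : 𝕋)) := by
      rw [hGfdef]
      simp only
      rw [← hxs x, hAdef]
    calc ENNReal.ofReal (H x)
        ≤ ENNReal.ofReal (2 * ((E - 1) ^ 2 * A ^ 2) + 2 * (A - f (rep x)) ^ 2) :=
          ENNReal.ofReal_le_ofReal hdecomp
      _ = ENNReal.ofReal (2 * ((E - 1) ^ 2 * A ^ 2))
            + ENNReal.ofReal (2 * (A - f (rep x)) ^ 2) :=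
          ENNReal.ofReal_add (by positivity) (by positivity)
      _ ≤ 2 * ENNReal.ofReal (4 * β ^ 2 * s ^ 2) * Gf (x + ((-(s * sgn x y) : ℝ) : 𝕋))
            + 2 * ENNReal.ofReal s * J x := by
          apply add_le_add
          · rw [ENNReal.ofReal_mul (by norm_num : (0:ℝ) ≤ 2), ENNReal.ofReal_ofNat]
            rw [mul_assoc]
            apply mul_le_mul_right
            calc ENNReal.ofReal ((E - 1) ^ 2 * A ^ 2)
                ≤ ENNReal.ofReal (4 * β ^ 2 * s ^ 2 * A ^ 2) :=
                  ENNReal.ofReal_le_ofReal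
                    (mul_le_mul_of_nonneg_right hEsq (sq_nonneg A))
              _ = ENNReal.ofReal (4 * β ^ 2 * s ^ 2) * ENNReal.ofReal (A ^ 2) :=
                  ENNReal.ofReal_mul (by positivity)
              _ = ENNReal.ofReal (4 * β ^ 2 * s ^ 2)
                    * Gf (x + ((-(s * sgn x y) : ℝ) : 𝕋)) := by rw [hGfeq]
          · rw [ENNReal.ofReal_mul (by norm_num : (0:ℝ) ≤ 2), ENNReal.ofReal_ofNat]
            rw [mul_assoc]
            exact mul_le_mul_right hcs _
  -- bound the Gf-shift integral
  have hGfshift : (∫⁻ x, Gf (x + ((-(s * sgn x y) : ℝ) : 𝕋)) ∂μ)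
      ≤ ENNReal.ofReal (2 * Real.exp 1) * IF := by
    apply lintegral_move_le ν hβ _ y Gf hmGf
    rw [abs_of_pos hs]
    calc s * β = β * s := mul_comm s β
      _ ≤ 1 := hβs
  -- bound the J integral via Fubini
  have hJbound : (∫⁻ x, J x ∂μ)
      ≤ ENNReal.ofReal s * (ENNReal.ofReal (2 * Real.exp 1) * ID) := by
    have hswap : (∫⁻ x, J x ∂μ)
        = ∫⁻ t in Ioc (0:ℝ) s, ∫⁻ x, q x t ∂μ :=
      lintegral_lintegral_swap hmq.aemeasurable
    rw [hswap]
    have hinner : ∀ t ∈ Ioc (0:ℝ) s, (∫⁻ x, q x t ∂μ)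
        ≤ ENNReal.ofReal (2 * Real.exp 1) * ID := by
      intro t ht
      have hconv : (fun x => q x t)
          = fun x => Gd (x + ((-(t * sgn x y) : ℝ) : 𝕋)) := by
        funext x
        show ENNReal.ofReal ((deriv f (rep x - t * sgn x y)) ^ 2) = _
        rw [hGddef]
        simp only
        rw [lift_add (deriv f) hper' x (-(t * sgn x y)), ← sub_eq_add_neg]
      rw [hconv]
      apply lintegral_move_le ν hβ _ y Gd hmGd
      rw [abs_of_pos ht.1]
      calc t * β ≤ s * β := mul_le_mul_of_nonneg_right ht.2 hβ0
        _ = β * s := mul_comm s β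
        _ ≤ 1 := hβs
    calc (∫⁻ t in Ioc (0:ℝ) s, ∫⁻ x, q x t ∂μ)
        ≤ ∫⁻ _ in Ioc (0:ℝ) s, (ENNReal.ofReal (2 * Real.exp 1) * ID) :=
          setLIntegral_mono measurable_const hinner
      _ = ENNReal.ofReal (2 * Real.exp 1) * ID * volume (Ioc (0:ℝ) s) :=
          setLIntegral_const _ _
      _ = ENNReal.ofReal s * (ENNReal.ofReal (2 * Real.exp 1) * ID) := by
          rw [Real.volume_Ioc, sub_zero, mul_comm]
  -- main chain
  set K : ℝ≥0∞ := ENNReal.ofReal (16 * Real.exp 1 * s ^ 2 * β ^ 2) with hKdef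
  have hmB1 : Measurable fun x : 𝕋 =>
      2 * ENNReal.ofReal (4 * β ^ 2 * s ^ 2) * Gf (x + ((-(s * sgn x y) : ℝ) : 𝕋)) :=
    (hmGf.comp (hmshift s)).const_mul _
  have hchain : (∫⁻ x in Metric.ball y (π - s), ENNReal.ofReal (H x) ∂μ)
      ≤ K * (ID + IF) := by
    calc (∫⁻ x in Metric.ball y (π - s), ENNReal.ofReal (H x) ∂μ)
        ≤ ∫⁻ x in Metric.ball y (π - s),
            (2 * ENNReal.ofReal (4 * β ^ 2 * s ^ 2) * Gf (x + ((-(s * sgn x y) : ℝ) : 𝕋))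
              + 2 * ENNReal.ofReal s * J x) ∂μ :=
          setLIntegral_mono (hmB1.add (hmJ.const_mul _)) hpt
      _ ≤ ∫⁻ x,
            (2 * ENNReal.ofReal (4 * β ^ 2 * s ^ 2) * Gf (x + ((-(s * sgn x y) : ℝ) : 𝕋))
              + 2 * ENNReal.ofReal s * J x) ∂μ :=
          setLIntegral_le_lintegral _ _
      _ = 2 * ENNReal.ofReal (4 * β ^ 2 * s ^ 2)
              * (∫⁻ x, Gf (x + ((-(s * sgn x y) : ℝ) : 𝕋)) ∂μ)
            + 2 * ENNReal.ofReal s * ∫⁻ x, J x ∂μ := by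
          rw [lintegral_add_left hmB1]
          rw [lintegral_const_mul _
            (show Measurable fun x : 𝕋 => Gf (x + ((-(s * sgn x y) : ℝ) : 𝕋)) from
              hmGf.comp (hmshift s)),
            lintegral_const_mul _ hmJ]
      _ ≤ 2 * ENNReal.ofReal (4 * β ^ 2 * s ^ 2)
              * (ENNReal.ofReal (2 * Real.exp 1) * IF)
            + 2 * ENNReal.ofReal s
              * (ENNReal.ofReal s * (ENNReal.ofReal (2 * Real.exp 1) * ID)) :=
          add_le_add (mul_le_mul_right hGfshift _) (mul_le_mul_right hJbound _)
      _ ≤ K * IF + K * ID := by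
          apply add_le_add
          · rw [show (2:ℝ≥0∞) = ENNReal.ofReal 2 by simp]
            rw [← ENNReal.ofReal_mul (by norm_num), ← mul_assoc,
              ← ENNReal.ofReal_mul (by positivity)]
            apply mul_le_mul_left
            apply ENNReal.ofReal_le_ofReal
            nlinarith [Real.exp_pos 1]
          · rw [show (2:ℝ≥0∞) = ENNReal.ofReal 2 by simp]
            rw [← ENNReal.ofReal_mul (by norm_num), ← mul_assoc,
              ← ENNReal.ofReal_mul (by positivity), ← mul_assoc,
              ← ENNReal.ofReal_mul (by positivity)]
            apply mul_le_mul_left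
            apply ENNReal.ofReal_le_ofReal
            have hβ2 : 1 ≤ β ^ 2 := by nlinarith
            have key : 0 ≤ Real.exp 1 * (s * s) * (β ^ 2 - 1) :=
              mul_nonneg (mul_nonneg (Real.exp_pos 1).le (by positivity)) (by linarith)
            nlinarith [Real.exp_pos 1, sq_nonneg s]
      _ = K * (ID + IF) := by rw [mul_add, add_comm]
  -- convert to Bochner integrals
  have hLHS : (∫ x in Metric.ball y (π - s), H x ∂μ)
      = (∫⁻ x in Metric.ball y (π - s), ENNReal.ofReal (H x) ∂μ).toReal :=
    integral_eq_lintegral_of_nonneg_ae (ae_of_all _ fun x => sq_nonneg _)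
      hmH.aestronglyMeasurable
  have hRHS1 : (∫ x, (deriv f (rep x)) ^ 2 ∂μ) = ID.toReal :=
    integral_eq_lintegral_of_nonneg_ae (ae_of_all _ fun x => sq_nonneg _)
      (hmd.pow_const 2).aestronglyMeasurable
  have hRHS2 : (∫ x, (f (rep x)) ^ 2 ∂μ) = IF.toReal :=
    integral_eq_lintegral_of_nonneg_ae (ae_of_all _ fun x => sq_nonneg _)
      (hmf.pow_const 2).aestronglyMeasurable
  have hKne : K * (ID + IF) ≠ ⊤ :=
    ENNReal.mul_ne_top ENNReal.ofReal_ne_top (ENNReal.add_ne_top.mpr ⟨hID, hIF⟩)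
  have hfinal := ENNReal.toReal_mono hKne hchain
  rw [ENNReal.toReal_mul, ENNReal.toReal_ofReal (by positivity),
    ENNReal.toReal_add hID hIF] at hfinal
  show (∫ x in Metric.ball y (π - s), H x ∂μ) ≤ _
  rw [hLHS, hRHS1, hRHS2]
  calc (∫⁻ x in Metric.ball y (π - s), ENNReal.ofReal (H x) ∂μ).toReal
      ≤ 16 * Real.exp 1 * s ^ 2 * β ^ 2 * (ID.toReal + IF.toReal) := hfinal
    _ = 16 * Real.exp 1 * s ^ 2 * β ^ 2 * (ID.toReal + IF.toReal) := rfl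

end main
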